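/- Let f : ℝ → ℂ be such that both f and its Fourier transform f̂ lie in the Wiener space W(ℝ). Then for α > 0 the Zak transforms satisfy Z_α f(x, y) = (e^{2πi x y}/α) · Z_{1/α} f̂(y, -x) for all x, y ∈ ℝ, where Z_α f(x,y) = ∑_{k∈ℤ} f(x - αk) e^{2πi α k y}. -/

import Mathlib

open Real MeasureTheory
open scoped FourierTransform

private lemma aux_floor_summable (a : ℤ → ℝ) (ha0 : ∀ m, 0 ≤ a m) (ha : Summable a)
    (β : ℝ) (hβ : 0 < β) (j : ℤ) :
    Summable fun n : ℤ => a (⌊β * n⌋ + j) := by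
  set K : ℕ := ⌈1 / β⌉₊ + 1 with hKdef
  haveI : NeZero K := ⟨Nat.succ_ne_zero _⟩
  have hβK : 1 ≤ β * K := by
    have h1 : 1 / β ≤ (K : ℝ) := le_trans (Nat.le_ceil _)
      (by exact_mod_cast Nat.le_succ ⌈1 / β⌉₊)
    have := mul_le_mul_of_nonneg_left h1 hβ.le
    calc (1:ℝ) = β * (1 / β) := by field_simp
    _ ≤ β * K := this
  have key : ∀ r : Fin K, Summable fun q : ℤ => a (⌊β * ((q * (K:ℤ) + (r:ℤ) : ℤ) : ℝ)⌋ + j) := by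
    intro r
    have mono : StrictMono fun q : ℤ => ⌊β * ((q * (K:ℤ) + (r:ℤ) : ℤ) : ℝ)⌋ + j := by
      apply strictMono_int_of_lt_succ
      intro q
      have he : β * (((q+1) * (K:ℤ) + (r:ℤ) : ℤ) : ℝ) = β * ((q * (K:ℤ) + (r:ℤ) : ℤ) : ℝ) + β * K := by
        push_cast; ring
      have h2 : ⌊β * ((q * (K:ℤ) + (r:ℤ) : ℤ) : ℝ)⌋ + 1 ≤ ⌊β * (((q+1) * (K:ℤ) + (r:ℤ) : ℤ) : ℝ)⌋ := by
        rw [he]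
        calc ⌊β * ((q * (K:ℤ) + (r:ℤ) : ℤ) : ℝ)⌋ + 1
            = ⌊β * ((q * (K:ℤ) + (r:ℤ) : ℤ) : ℝ) + 1⌋ := (Int.floor_add_one _).symm
        _ ≤ _ := Int.floor_le_floor (by linarith)
      omega
    exact ha.comp_injective mono.injective
  have h2 : Summable ((fun n : ℤ => a (⌊β * n⌋ + j)) ∘ ⇑(Int.divModEquiv K).symm) := by
    have hnn : 0 ≤ fun p : ℤ × Fin K => a (⌊β * ((p.1 * (K:ℤ) + (p.2:ℤ) : ℤ) : ℝ)⌋ + j) :=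
      fun p => ha0 _
    have hs : Summable fun p : ℤ × Fin K => a (⌊β * ((p.1 * (K:ℤ) + (p.2:ℤ) : ℤ) : ℝ)⌋ + j) := by
      refine (summable_prod_of_nonneg hnn).mpr ⟨fun q => Summable.of_finite, ?_⟩
      apply Summable.congr
        (f := fun q : ℤ => ∑ r : Fin K, a (⌊β * ((q * (K:ℤ) + (r:ℤ) : ℤ) : ℝ)⌋ + j))
      · exact summable_sum fun r _ => key r
      · intro q
        exact (tsum_fintype _).symm
    convert hs using 1
    exact funext fun p => rfl
  exact ((Int.divModEquiv K).symm.summable_iff).mp h2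

private lemma aux_norm_le_sup (f : ℝ → ℂ) (hf : Continuous f) (u : ℝ) :
    ‖f u‖ ≤ ⨆ x : Set.Icc (0:ℝ) 1, ‖f ((x:ℝ) + ⌊u⌋)‖ := by
  have hbdd : BddAbove (Set.range fun x : Set.Icc (0:ℝ) 1 => ‖f ((x:ℝ) + ⌊u⌋)‖) :=
    (isCompact_range (by fun_prop)).bddAbove
  have hmem : Int.fract u ∈ Set.Icc (0:ℝ) 1 := ⟨Int.fract_nonneg u, (Int.fract_lt_one u).le⟩
  have h := le_ciSup hbdd (⟨Int.fract u, hmem⟩ : Set.Icc (0:ℝ) 1)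
  simpa only [Int.fract_add_floor] using h

private lemma aux_sup_nonneg (f : ℝ → ℂ) (m : ℤ) :
    0 ≤ ⨆ x : Set.Icc (0:ℝ) 1, ‖f ((x:ℝ) + m)‖ :=
  Real.iSup_nonneg fun _ => norm_nonneg _

private lemma aux_summable_sup_scaled (f : ℝ → ℂ) (hf : Continuous f)
    (hW : Summable fun n : ℤ => ⨆ x : Set.Icc (0:ℝ) 1, ‖f ((x:ℝ) + n)‖)
    (β R : ℝ) (hβ : 0 < β) :
    Summable fun n : ℤ => ⨆ t : Set.Icc (-R) R, ‖f (β * ((t:ℝ) + n))‖ := by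
  set a : ℤ → ℝ := fun m => ⨆ x : Set.Icc (0:ℝ) 1, ‖f ((x:ℝ) + m)‖ with ha_def
  have ha0 : ∀ m, 0 ≤ a m := aux_sup_nonneg f
  set M : ℤ := ⌈β * R⌉ + 1 with hM
  set b : ℤ → ℝ := fun n => ∑ j ∈ Finset.Icc (-M) M, a (⌊β * n⌋ + j) with hb
  have hbsum : Summable b :=
    summable_sum fun j _ => aux_floor_summable a ha0 hW β hβ j
  have hb0 : ∀ n, 0 ≤ b n := fun n => Finset.sum_nonneg fun j _ => ha0 _
  refine Summable.of_nonneg_of_le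
    (fun n => Real.iSup_nonneg fun _ => norm_nonneg _) (fun n => ?_) hbsum
  refine Real.iSup_le (fun t => ?_) (hb0 n)
  have hu := aux_norm_le_sup f hf (β * ((t:ℝ) + n))
  refine hu.trans ?_
  set u : ℝ := β * ((t:ℝ) + n) with hu_def
  have htR : -R ≤ (t:ℝ) ∧ (t:ℝ) ≤ R := ⟨t.2.1, t.2.2⟩
  have hfl : β * n - β * R ≤ u ∧ u ≤ β * n + β * R := by
    constructor <;> [nlinarith [htR.1, hβ.le]; nlinarith [htR.2, hβ.le]]
  have hlow : ⌊β * (n:ℝ)⌋ - M ≤ ⌊u⌋ := by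
    have : ((⌊β * (n:ℝ)⌋ - M : ℤ) : ℝ) ≤ u := by
      push_cast
      have h1 := Int.floor_le (β * (n:ℝ))
      have h2 := Int.le_ceil (β * R)
      push_cast [hM] at *
      linarith [hfl.1]
    exact Int.le_floor.mpr this
  have hhigh : ⌊u⌋ ≤ ⌊β * (n:ℝ)⌋ + M := by
    have h1 := Int.lt_floor_add_one (β * (n:ℝ))
    have h2 := Int.le_ceil (β * R)
    have h3 : u < ((⌊β * (n:ℝ)⌋ + M + 1 : ℤ) : ℝ) := by
      push_cast [hM] at *
      linarith [hfl.2]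
    have := Int.floor_lt.mpr h3
    omega
  have hmem : ⌊u⌋ - ⌊β * (n:ℝ)⌋ ∈ Finset.Icc (-M) M := by
    rw [Finset.mem_Icc]; omega
  have hsingle := Finset.single_le_sum (f := fun j => a (⌊β * (n:ℝ)⌋ + j))
    (fun j _ => ha0 _) hmem
  calc a ⌊u⌋ = a (⌊β * (n:ℝ)⌋ + (⌊u⌋ - ⌊β * (n:ℝ)⌋)) := by ring_nf
  _ ≤ b n := hsingle

theorem zak_transform_fourier_relation (f g : ℝ → ℂ)
    (hf : Continuous f) (hg : Continuous g)
    (hfi : Integrable f)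
    (hgdef : ∀ w : ℝ, g w = ∫ x : ℝ, f x * Complex.exp (-(2 * π * Complex.I) * w * x))
    (hWf : Summable fun n : ℤ => ⨆ x : Set.Icc (0 : ℝ) 1, ‖f ((x : ℝ) + n)‖)
    (hWg : Summable fun n : ℤ => ⨆ x : Set.Icc (0 : ℝ) 1, ‖g ((x : ℝ) + n)‖)
    (α : ℝ) (hα : 0 < α) :
    ∀ x y : ℝ,
      ∑' k : ℤ, f (x - α * k) * Complex.exp (2 * π * Complex.I * α * k * y) =
        Complex.exp (2 * π * Complex.I * x * y) / α *
          ∑' k : ℤ, g (y - k / α) * Complex.exp (2 * π * Complex.I * (1 / α) * k * (-x)) := by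
  intro x y
  have hαne : α ≠ 0 := hα.ne'
  set F : C(ℝ, ℂ) :=
    ⟨fun t => f (α * t) * Complex.exp (↑(-(2 * π) * (α * t) * y) * Complex.I), by fun_prop⟩
    with hF
  -- the summability hypothesis over every compact set
  have h_norm : ∀ K : TopologicalSpace.Compacts ℝ,
      Summable fun n : ℤ => ‖(F.comp (ContinuousMap.addRight (n : ℝ))).restrict K‖ := by
    intro K
    obtain ⟨R, hR⟩ : ∃ R, (K : Set ℝ) ⊆ Set.Icc (-R) R := by
      obtain ⟨R, hR⟩ := K.isCompact.isBounded.subset_closedBall 0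
      exact ⟨R, by rwa [Real.closedBall_eq_Icc, zero_sub, zero_add] at hR⟩
    refine Summable.of_nonneg_of_le (fun n => norm_nonneg _) (fun n => ?_)
      (aux_summable_sup_scaled f hf hWf α R hα)
    refine (ContinuousMap.norm_le _ (Real.iSup_nonneg fun _ => norm_nonneg _)).mpr fun z => ?_
    have hz : (z : ℝ) ∈ Set.Icc (-R) R := hR z.2
    have hbdd : BddAbove (Set.range fun t : Set.Icc (-R) R => ‖f (α * ((t : ℝ) + n))‖) :=
      (isCompact_range (by fun_prop)).bddAbove
    have hle := le_ciSup hbdd (⟨(z : ℝ), hz⟩ : Set.Icc (-R) R)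
    simp only [ContinuousMap.restrict_apply, ContinuousMap.comp_apply,
      ContinuousMap.coe_addRight, hF, ContinuousMap.coe_mk, norm_mul]
    rw [Complex.norm_exp_ofReal_mul_I, mul_one]
    exact hle
  -- the Fourier transform of F
  have hFT : ∀ w : ℝ, 𝓕 (⇑F) w = ((α⁻¹ : ℝ) : ℂ) * g (y + w / α) := by
    intro w
    rw [Real.fourier_real_eq_integral_exp_smul]
    have hcv : (fun t : ℝ => Complex.exp (↑(-2 * π * t * w) * Complex.I) • F t)
        = fun t : ℝ => (fun u : ℝ =>
            f u * Complex.exp (-(2 * π * Complex.I) * ↑(y + w / α) * ↑u)) (α * t) := by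
      funext t
      simp only [smul_eq_mul, hF, ContinuousMap.coe_mk]
      rw [mul_comm (Complex.exp _) (f (α * t) * _), mul_assoc, ← Complex.exp_add]
      congr 1
      have hαc : (α : ℂ) ≠ 0 := Complex.ofReal_ne_zero.mpr hαne
      congr 1
      push_cast
      field_simp
      ring
    rw [hcv, MeasureTheory.Measure.integral_comp_mul_left
      (fun u : ℝ => f u * Complex.exp (-(2 * π * Complex.I) * ↑(y + w / α) * ↑u)) α,
      ← hgdef (y + w / α), abs_of_pos (inv_pos.mpr hα), Complex.real_smul]
  -- summability of the Fourier transforms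
  have hgs : Summable fun n : ℤ => ‖g (y + n / α)‖ := by
    set R : ℝ := |α * y| + 1 with hRdef
    refine Summable.of_nonneg_of_le (fun n => norm_nonneg _) (fun n => ?_)
      (aux_summable_sup_scaled g hg hWg α⁻¹ R (inv_pos.mpr hα))
    have hmem : α * y ∈ Set.Icc (-R) R := by
      constructor
      · rw [hRdef]; linarith [neg_abs_le (α * y)]
      · rw [hRdef]; linarith [le_abs_self (α * y)]
    have hbdd : BddAbove (Set.range fun t : Set.Icc (-R) R => ‖g (α⁻¹ * ((t : ℝ) + n))‖) :=
      (isCompact_range (by fun_prop)).bddAbove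
    have hle := le_ciSup hbdd (⟨α * y, hmem⟩ : Set.Icc (-R) R)
    have harg : α⁻¹ * (α * y + (n : ℝ)) = y + n / α := by field_simp
    rwa [harg] at hle
  have h_sum : Summable fun n : ℤ => 𝓕 (⇑F) n := by
    have : Summable fun n : ℤ => g (y + n / α) := Summable.of_norm hgs
    exact (this.mul_left _).congr fun n => (hFT n).symm
  -- Poisson summation
  have hP := Real.tsum_eq_tsum_fourier h_norm h_sum (x / α)
  -- rewrite the left-hand side
  have hL : ∑' k : ℤ, f (x - α * k) * Complex.exp (2 * π * Complex.I * α * k * y)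
      = ∑' n : ℤ, Complex.exp (2 * π * Complex.I * x * y) * F (x / α + n) := by
    rw [← (Equiv.neg ℤ).tsum_eq]
    refine tsum_congr fun n => ?_
    simp only [Equiv.neg_apply, hF, ContinuousMap.coe_mk]
    have h1 : x - α * ((-n : ℤ) : ℝ) = x + α * n := by push_cast; ring
    have h2 : α * (x / α + (n : ℝ)) = x + α * n := by field_simp
    rw [h1, h2]
    have hexp : Complex.exp (2 * π * Complex.I * α * ((-n : ℤ) : ℂ) * y)
        = Complex.exp (2 * π * Complex.I * x * y) *
          Complex.exp (↑(-(2 * π) * (x + α * n) * y) * Complex.I) := by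
      rw [← Complex.exp_add]; congr 1; push_cast; ring
    rw [hexp]; ring
  -- rewrite the right-hand side
  have hR : ∑' k : ℤ, g (y - k / α) * Complex.exp (2 * π * Complex.I * (1 / α) * k * (-x))
      = ∑' n : ℤ, g (y + n / α) * Complex.exp (2 * π * Complex.I * n * (x / α)) := by
    rw [← (Equiv.neg ℤ).tsum_eq]
    refine tsum_congr fun n => ?_
    simp only [Equiv.neg_apply]
    have h1 : y - ((-n : ℤ) : ℝ) / α = y + n / α := by push_cast; ring
    rw [h1]
    congr 2
    push_cast
    ring
  -- the Poisson terms
  have hterm : ∀ n : ℤ, 𝓕 (⇑F) n * fourier n (↑(x / α) : UnitAddCircle)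
      = ((α⁻¹ : ℝ) : ℂ) * (g (y + n / α) * Complex.exp (2 * π * Complex.I * n * (x / α))) := by
    intro n
    rw [hFT, fourier_coe_apply]
    push_cast
    rw [div_one]
    ring
  calc ∑' k : ℤ, f (x - α * k) * Complex.exp (2 * π * Complex.I * α * k * y)
      = ∑' n : ℤ, Complex.exp (2 * π * Complex.I * x * y) * F (x / α + n) := hL
  _ = Complex.exp (2 * π * Complex.I * x * y) * ∑' n : ℤ, F (x / α + n) := tsum_mul_left
  _ = Complex.exp (2 * π * Complex.I * x * y) *
        ∑' n : ℤ, 𝓕 (⇑F) n * fourier n (↑(x / α) : UnitAddCircle) := by rw [hP]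
  _ = Complex.exp (2 * π * Complex.I * x * y) *
        ∑' n : ℤ, ((α⁻¹ : ℝ) : ℂ) *
          (g (y + n / α) * Complex.exp (2 * π * Complex.I * n * (x / α))) := by
      rw [tsum_congr hterm]
  _ = Complex.exp (2 * π * Complex.I * x * y) * (((α⁻¹ : ℝ) : ℂ) *
        ∑' n : ℤ, g (y + n / α) * Complex.exp (2 * π * Complex.I * n * (x / α))) := by
      rw [tsum_mul_left]
  _ = Complex.exp (2 * π * Complex.I * x * y) / α *
        ∑' k : ℤ, g (y - k / α) * Complex.exp (2 * π * Complex.I * (1 / α) * k * (-x)) := by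
      rw [hR]
      push_cast
      rw [div_eq_mul_inv]
      ring
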